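/- Let H be a real Hilbert space, let {C_i}_{i=1}^m be a finite family of nonempty, closed and convex subsets of H, let r > 1 be an integer, let f : ℕ → {1,…,m} be surjective, and let S_n and the sequence (x_n) be as in the setup. Suppose there exists a weakly regular operator S : H → H with Fix(S) ≠ ∅ and Fix(S) ⊆ ∩_{i=1}^m C_i, and suppose that ‖S x_n − x_n‖ → 0. Then (x_n) converges weakly to a point x_* ∈ ∩_{i=1}^m C_i. -/

import Mathlib

open Filter Topology RealInnerProductSpace

variable {H : Type*} [NormedAddCommGroup H] [InnerProductSpace ℝ H] [CompleteSpace H]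

/-- Weak convergence in a Hilbert space: `x n ⇀ p`. -/
def WeakConvergesTo (x : ℕ → H) (p : H) : Prop :=
  ∀ y : H, Tendsto (fun n => ⟪x n, y⟫) atTop (𝓝 ⟪p, y⟫)

/-- `compSeq n g = g (n-1) ∘ ⋯ ∘ g 0` (the identity when `n = 0`). -/
def compSeq {α : Type*} : ℕ → (ℕ → α → α) → (α → α)
  | 0, _ => id
  | n + 1, g => g n ∘ compSeq n g

/-- `P` is the metric projection onto `C`. -/
def IsProjOn (C : Set H) (P : H → H) : Prop :=
  ∀ x, P x ∈ C ∧ ∀ y ∈ C, ‖x - P x‖ ≤ ‖x - y‖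

/-- Nonexpansive operator. -/
def Nonexpansive (T : H → H) : Prop := ∀ x y, ‖T x - T y‖ ≤ ‖x - y‖

/-- Condition (S). -/
def CondS (T : H → H) : Prop :=
  ∀ x y : ℕ → H, (∃ c, ∀ n, ‖x n - y n‖ ≤ c) →
    Tendsto (fun n => ‖x n - y n‖ - ‖T (x n) - T (y n)‖) atTop (𝓝 0) →
    Tendsto (fun n => x n - y n - (T (x n) - T (y n))) atTop (𝓝 (0 : H))

/-- Strongly nonexpansive operator. -/
def StronglyNonexpansive (T : H → H) : Prop := Nonexpansive T ∧ CondS T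

/-- Firmly nonexpansive operator. -/
def FirmlyNonexpansive (T : H → H) : Prop :=
  ∀ x y, ‖T x - T y‖ ^ 2 ≤ ⟪T x - T y, x - y⟫

/-- Averaged operator. -/
def Averaged (T : H → H) : Prop :=
  ∃ lam ∈ Set.Ioo (0 : ℝ) 1, ∃ U : H → H, Nonexpansive U ∧
    T = fun x => (1 - lam) • x + lam • U x

/-- The unrestricted `r`-set Douglas–Rachford operators `S n` associated with projections
`proj i` onto the sets `C i`, indices chosen by `f`: `S n = 2⁻¹ (Id + R_{C_{f((r-1)n+r-1)}} ∘ ⋯ ∘ R_{C_{f((r-1)n)}})`. -/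
noncomputable def drS (proj : ℕ → H → H) (r : ℕ) (f : ℕ → ℕ) (n : ℕ) : H → H :=
  fun x => (2⁻¹ : ℝ) • (x + compSeq r (fun j y => (2 : ℝ) • proj (f ((r - 1) * n + j)) y - y) x)

/- ### Auxiliary lemmas -/

lemma proj_fix {C : Set H} {P : H → H} (h : IsProjOn C P) {z : H} (hz : z ∈ C) : P z = z := by
  have := (h z).2 z hz
  simp only [sub_self, norm_zero] at this
  have : ‖z - P z‖ = 0 := le_antisymm this (norm_nonneg _)
  rw [norm_eq_zero, sub_eq_zero] at this
  exact this.symm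

lemma proj_var {C : Set H} {P : H → H} (h : IsProjOn C P) (hconv : Convex ℝ C) (x : H) :
    ∀ w ∈ C, ⟪x - P x, w - P x⟫ ≤ 0 := by
  have hmem := (h x).1
  haveI : Nonempty C := ⟨⟨P x, hmem⟩⟩
  have : ‖x - P x‖ = ⨅ w : C, ‖x - (w : H)‖ := by
    refine le_antisymm (le_ciInf fun w => (h x).2 w w.2) ?_
    exact ciInf_le ⟨0, by rintro t ⟨w, rfl⟩; exact norm_nonneg _⟩ (⟨P x, hmem⟩ : C)
  exact (norm_eq_iInf_iff_real_inner_le_zero hconv hmem).1 this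

lemma proj_firm {C : Set H} {P : H → H} (h : IsProjOn C P) (hconv : Convex ℝ C) (x y : H) :
    ‖P x - P y‖ ^ 2 ≤ ⟪x - y, P x - P y⟫ := by
  have h1 := proj_var h hconv x (P y) (h y).1
  have h2 := proj_var h hconv y (P x) (h x).1
  have e : ⟪x - y, P x - P y⟫ - ‖P x - P y‖ ^ 2
      = -⟪x - P x, P y - P x⟫ - ⟪y - P y, P x - P y⟫ := by
    simp only [inner_sub_left, inner_sub_right, ← real_inner_self_eq_norm_sq]
    rw [real_inner_comm (P y) x, real_inner_comm (P y) (P x)]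
    ring
  nlinarith [h1, h2]

lemma refl_nonexp {C : Set H} {P : H → H} (h : IsProjOn C P) (hconv : Convex ℝ C) (x y : H) :
    ‖((2:ℝ) • P x - x) - ((2:ℝ) • P y - y)‖ ≤ ‖x - y‖ := by
  have hf := proj_firm h hconv x y
  have e : ((2:ℝ) • P x - x) - ((2:ℝ) • P y - y) = (2:ℝ) • (P x - P y) - (x - y) := by
    module
  have hsq : ‖((2:ℝ) • P x - x) - ((2:ℝ) • P y - y)‖ ^ 2 ≤ ‖x - y‖ ^ 2 := by
    rw [e]
    have hn := norm_sub_sq_real ((2:ℝ) • (P x - P y)) (x - y)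
    rw [hn, norm_smul, inner_smul_left]
    simp only [RCLike.ofReal_real_eq_id, id, Real.norm_ofNat, starRingEnd_apply, star_trivial]
    nlinarith [hf, real_inner_comm (P x - P y) (x - y)]
  nlinarith [norm_nonneg (((2:ℝ) • P x - x) - ((2:ℝ) • P y - y)), norm_nonneg (x - y)]

lemma compSeq_nonexp (g : ℕ → H → H) (hg : ∀ j, ∀ a b : H, ‖g j a - g j b‖ ≤ ‖a - b‖) :
    ∀ r (a b : H), ‖compSeq r g a - compSeq r g b‖ ≤ ‖a - b‖ := by
  intro r
  induction r with
  | zero => intro a b; simp [compSeq]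
  | succ n ih =>
    intro a b
    calc ‖compSeq (n+1) g a - compSeq (n+1) g b‖
        = ‖g n (compSeq n g a) - g n (compSeq n g b)‖ := rfl
      _ ≤ ‖compSeq n g a - compSeq n g b‖ := hg n _ _
      _ ≤ ‖a - b‖ := ih a b

lemma compSeq_fix {α : Type*} (g : ℕ → α → α) {z : α} (hg : ∀ j, g j z = z) :
    ∀ r, compSeq r g z = z := by
  intro r
  induction r with
  | zero => rfl
  | succ n ih => show g n (compSeq n g z) = z; rw [ih, hg]

lemma weak_cluster (u : ℕ → H) (c : ℝ) (hc : ∀ n, ‖u n‖ ≤ c) :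
    ∃ q : H, ∃ φ : ℕ → ℕ, StrictMono φ ∧
      ∀ y : H, Tendsto (fun j => ⟪u (φ j), y⟫) atTop (𝓝 ⟪q, y⟫) := by
  have hc0 : (0:ℝ) ≤ c := le_trans (norm_nonneg _) (hc 0)
  set g : ℕ → ℕ → ℝ := fun n k => ⟪u n, u k⟫ with hg_def
  have hg : ∀ n, g n ∈ Set.univ.pi fun _ : ℕ => Set.Icc (-(c*c)) (c*c) := by
    intro n
    rw [Set.mem_univ_pi]
    intro k
    rw [Set.mem_Icc, ← abs_le]
    exact (abs_real_inner_le_norm _ _).trans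
      (mul_le_mul (hc n) (hc k) (norm_nonneg _) hc0)
  obtain ⟨a, -, φ, hφ, hconv⟩ :=
    (isCompact_univ_pi fun _ : ℕ => isCompact_Icc).tendsto_subseq hg
  have hcoord : ∀ k, Tendsto (fun j => ⟪u (φ j), u k⟫) atTop (𝓝 (a k)) := fun k =>
    (tendsto_pi_nhds.1 hconv) k
  set K := (Submodule.span ℝ (Set.range u)).topologicalClosure with hK_def
  haveI : CompleteSpace K := (Submodule.isClosed_topologicalClosure _).completeSpace_coe
  have hK : ∀ n, u n ∈ K := fun n =>
    Submodule.le_topologicalClosure _ (Submodule.subset_span ⟨n, rfl⟩)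
  have hspan : ∀ y ∈ Submodule.span ℝ (Set.range u),
      ∃ L, Tendsto (fun j => ⟪u (φ j), y⟫) atTop (𝓝 L) := by
    intro y hy
    induction hy using Submodule.span_induction with
    | mem y hy => obtain ⟨k, rfl⟩ := hy; exact ⟨a k, hcoord k⟩
    | zero => exact ⟨0, by simp⟩
    | add y z _ _ hy hz =>
        obtain ⟨L1, h1⟩ := hy; obtain ⟨L2, h2⟩ := hz
        exact ⟨L1 + L2, by simpa [inner_add_right] using h1.add h2⟩
    | smul t y _ hy =>
        obtain ⟨L, h1⟩ := hy
        exact ⟨t * L, by simpa [inner_smul_right] using h1.const_mul t⟩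
  have hCauchy : ∀ y : H, ∃ L, Tendsto (fun j => ⟪u (φ j), y⟫) atTop (𝓝 L) := by
    intro y
    set v := (K.orthogonalProjectionOnto y : H) with hv_def
    have hv : v ∈ K := (K.orthogonalProjectionOnto y).2
    have hperp : y - v ∈ Kᗮ := K.sub_starProjection_mem_orthogonal y
    have heq : ∀ n, ⟪u n, y⟫ = ⟪u n, v⟫ := by
      intro n
      have h0 : ⟪u n, y - v⟫ = 0 := (Submodule.mem_orthogonal _ _).1 hperp (u n) (hK n)
      rw [inner_sub_right] at h0
      linarith
    suffices h : CauchySeq (fun j => (⟪u (φ j), v⟫ : ℝ)) by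
      obtain ⟨L, hL⟩ := cauchySeq_tendsto_of_complete h
      exact ⟨L, by simpa only [heq] using hL⟩
    rw [Metric.cauchySeq_iff]
    intro ε hε
    have hvc : v ∈ closure ((Submodule.span ℝ (Set.range u) : Submodule ℝ H) : Set H) := hv
    obtain ⟨s, hs, hss⟩ := Metric.mem_closure_iff.1 hvc (ε/(4*(c+1))) (by positivity)
    obtain ⟨L, hL⟩ := hspan s hs
    obtain ⟨N, hN⟩ := Metric.cauchySeq_iff.1 hL.cauchySeq (ε/2) (by positivity)
    refine ⟨N, fun p hp q hq => ?_⟩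
    have key : ∀ n, |(⟪u n, v⟫:ℝ) - ⟪u n, s⟫| ≤ ε/4 := by
      intro n
      rw [← inner_sub_right]
      have h1 : |(⟪u n, v - s⟫:ℝ)| ≤ c * (ε/(4*(c+1))) := by
        refine (abs_real_inner_le_norm _ _).trans ?_
        refine mul_le_mul (hc n) ?_ (norm_nonneg _) hc0
        rw [dist_eq_norm] at hss
        exact le_of_lt hss
      have h2 : c * (ε/(4*(c+1))) ≤ ε/4 := by
        have hcp : (0:ℝ) < c + 1 := by linarith
        have h4 : (0:ℝ) < 4*(c+1) := by linarith
        rw [mul_div_assoc', div_le_div_iff₀ h4 (by norm_num : (0:ℝ) < 4)]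
        nlinarith [hε.le]
      exact h1.trans h2
    have h3 := hN p hp q hq
    rw [Real.dist_eq] at h3 ⊢
    have k1 := key (φ p)
    have k2 := key (φ q)
    have t1 : |(⟪u (φ p), v⟫:ℝ) - ⟪u (φ q), v⟫| ≤
        |(⟪u (φ p), v⟫:ℝ) - ⟪u (φ p), s⟫| + |(⟪u (φ p), s⟫:ℝ) - ⟪u (φ q), s⟫|
          + |(⟪u (φ q), s⟫:ℝ) - ⟪u (φ q), v⟫| := by
      have := abs_sub_le (⟪u (φ p), v⟫:ℝ) (⟪u (φ p), s⟫:ℝ) (⟪u (φ q), v⟫:ℝ)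
      have := abs_sub_le (⟪u (φ p), s⟫:ℝ) (⟪u (φ q), s⟫:ℝ) (⟪u (φ q), v⟫:ℝ)
      linarith
    rw [abs_sub_comm (⟪u (φ q), s⟫:ℝ)] at t1
    linarith
  choose L hL using hCauchy
  have hadd : ∀ y z, L (y + z) = L y + L z := fun y z =>
    tendsto_nhds_unique (hL (y + z)) (by simpa [inner_add_right] using (hL y).add (hL z))
  have hsmul : ∀ (t : ℝ) y, L (t • y) = t * L y := fun t y =>
    tendsto_nhds_unique (hL (t • y)) (by simpa [inner_smul_right] using (hL y).const_mul t)
  have hbound : ∀ y, |L y| ≤ c * ‖y‖ := fun y =>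
    le_of_tendsto (hL y).abs (Filter.Eventually.of_forall fun j =>
      (abs_real_inner_le_norm _ _).trans (mul_le_mul_of_nonneg_right (hc _) (norm_nonneg _)))
  set G : H →ₗ[ℝ] ℝ :=
    { toFun := L, map_add' := hadd, map_smul' := hsmul } with hG_def
  set G' := G.mkContinuous c (fun y => by rw [Real.norm_eq_abs]; exact hbound y) with hG'_def
  refine ⟨(InnerProductSpace.toDual ℝ H).symm G', φ, hφ, fun y => ?_⟩
  have hq : (⟪(InnerProductSpace.toDual ℝ H).symm G', y⟫:ℝ) = G' y := by
    rw [← InnerProductSpace.toDual_apply_apply]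
    simp
  rw [hq]
  exact hL y

/-- Theorem 3.1(i): unrestricted DR algorithm with an auxiliary weakly regular
operator `S`. -/
theorem stmt0
    (m r : ℕ) (hr : 1 < r)
    (C : ℕ → Set H)
    (hC : ∀ i ∈ Set.Icc 1 m, (C i).Nonempty ∧ IsClosed (C i) ∧ Convex ℝ (C i))
    (proj : ℕ → H → H) (hproj : ∀ i ∈ Set.Icc 1 m, IsProjOn (C i) (proj i))
    (f : ℕ → ℕ) (hf : Set.range f = Set.Icc 1 m)
    (x : ℕ → H) (hx : ∀ n, x (n + 1) = drS proj r f n (x n))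
    (S : H → H)
    (hSreg : ∀ (u : ℕ → H) (p : H), WeakConvergesTo u p →
      Tendsto (fun n => S (u n) - u n) atTop (𝓝 (0 : H)) → S p = p)
    (hSfix : ∃ z, S z = z)
    (hSsub : {z | S z = z} ⊆ ⋂ i ∈ Set.Icc 1 m, C i)
    (hconv : Tendsto (fun n => ‖S (x n) - x n‖) atTop (𝓝 0)) :
    ∃ p ∈ ⋂ i ∈ Set.Icc 1 m, C i, WeakConvergesTo x p := by
  have hfmem : ∀ k, f k ∈ Set.Icc 1 m := fun k => hf ▸ Set.mem_range_self k
  set F := ⋂ i ∈ Set.Icc 1 m, C i with hF_def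
  obtain ⟨z₀, hz₀⟩ := hSfix
  have hz₀F : z₀ ∈ F := hSsub hz₀
  have hmemC : ∀ z ∈ F, ∀ i ∈ Set.Icc 1 m, z ∈ C i := fun z hz =>
    Set.mem_iInter₂.1 hz
  -- the DR operators are nonexpansive
  have hdr_nonexp : ∀ n (s t : H), ‖drS proj r f n s - drS proj r f n t‖ ≤ ‖s - t‖ := by
    intro n s t
    have hg : ∀ j (a b : H),
        ‖((2:ℝ) • proj (f ((r-1)*n+j)) a - a) - ((2:ℝ) • proj (f ((r-1)*n+j)) b - b)‖
          ≤ ‖a - b‖ := by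
      intro j a b
      have hi := hfmem ((r-1)*n+j)
      exact refl_nonexp (hproj _ hi) (hC _ hi).2.2 a b
    have hT := compSeq_nonexp _ hg r s t
    show ‖(2⁻¹:ℝ) • (s + _) - (2⁻¹:ℝ) • (t + _)‖ ≤ ‖s - t‖
    rw [← smul_sub, norm_smul]
    have e : (s + compSeq r (fun j y => (2:ℝ) • proj (f ((r-1)*n+j)) y - y) s)
        - (t + compSeq r (fun j y => (2:ℝ) • proj (f ((r-1)*n+j)) y - y) t)
        = (s - t) + (compSeq r (fun j y => (2:ℝ) • proj (f ((r-1)*n+j)) y - y) s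
            - compSeq r (fun j y => (2:ℝ) • proj (f ((r-1)*n+j)) y - y) t) := by abel
    rw [e]
    have := norm_add_le (s - t)
      (compSeq r (fun j y => (2:ℝ) • proj (f ((r-1)*n+j)) y - y) s
        - compSeq r (fun j y => (2:ℝ) • proj (f ((r-1)*n+j)) y - y) t)
    simp only [norm_inv, Real.norm_ofNat]
    linarith
  -- points of F are fixed by the DR operators
  have hdr_fix : ∀ n, ∀ z ∈ F, drS proj r f n z = z := by
    intro n z hz
    have hg : ∀ j, ((2:ℝ) • proj (f ((r-1)*n+j)) z - z) = z := by
      intro j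
      have hi := hfmem ((r-1)*n+j)
      rw [proj_fix (hproj _ hi) (hmemC z hz _ hi), two_smul, add_sub_cancel_right]
    show (2⁻¹:ℝ) • (z + compSeq r (fun j y => (2:ℝ) • proj (f ((r-1)*n+j)) y - y) z) = z
    rw [compSeq_fix (fun j y => (2:ℝ) • proj (f ((r-1)*n+j)) y - y) hg r, ← two_smul ℝ z, smul_smul]
    norm_num
  -- Fejér monotonicity
  have hfe : ∀ z ∈ F, Antitone (fun n => ‖x n - z‖) := by
    intro z hz
    refine antitone_nat_of_succ_le fun n => ?_
    rw [hx n]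
    calc ‖drS proj r f n (x n) - z‖
        = ‖drS proj r f n (x n) - drS proj r f n z‖ := by rw [hdr_fix n z hz]
      _ ≤ ‖x n - z‖ := hdr_nonexp n _ _
  have hnormlim : ∀ z ∈ F, ∃ l, Tendsto (fun n => ‖x n - z‖) atTop (𝓝 l) := fun z hz =>
    ⟨_, tendsto_atTop_ciInf (hfe z hz) ⟨0, by rintro t ⟨n, rfl⟩; exact norm_nonneg _⟩⟩
  have hbdd : ∀ n, ‖x n‖ ≤ ‖x 0 - z₀‖ + ‖z₀‖ := by
    intro n
    have h1 : ‖x n - z₀‖ ≤ ‖x 0 - z₀‖ := hfe z₀ hz₀F (Nat.zero_le n)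
    calc ‖x n‖ = ‖(x n - z₀) + z₀‖ := by rw [sub_add_cancel]
      _ ≤ ‖x n - z₀‖ + ‖z₀‖ := norm_add_le _ _
      _ ≤ _ := by linarith
  -- convergence of inner products against differences of points of F
  have hinner : ∀ p ∈ F, ∀ q ∈ F, ∃ t, Tendsto (fun n => (⟪x n, p - q⟫:ℝ)) atTop (𝓝 t) := by
    intro p hp q hq
    obtain ⟨lp, hlp⟩ := hnormlim p hp
    obtain ⟨lq, hlq⟩ := hnormlim q hq
    refine ⟨(lq^2 - lp^2 - ‖q‖^2 + ‖p‖^2)/2, ?_⟩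
    have hfun : ∀ n, (⟪x n, p - q⟫:ℝ)
        = (‖x n - q‖^2 - ‖x n - p‖^2 - ‖q‖^2 + ‖p‖^2)/2 := by
      intro n
      have e1 := norm_sub_sq_real (x n) q
      have e2 := norm_sub_sq_real (x n) p
      rw [inner_sub_right]
      linarith
    simp only [hfun]
    exact ((((hlq.pow 2).sub (hlp.pow 2)).sub tendsto_const_nhds).add
      tendsto_const_nhds).div_const 2
  -- extraction of weak cluster points lying in F
  have hclaim : ∀ ns : ℕ → ℕ, Tendsto ns atTop atTop →
      ∃ q ∈ F, ∃ ms : ℕ → ℕ, StrictMono ms ∧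
        ∀ y, Tendsto (fun j => (⟪x (ns (ms j)), y⟫:ℝ)) atTop (𝓝 ⟪q, y⟫) := by
    intro ns hns
    obtain ⟨q, ms, hms, hq⟩ := weak_cluster (fun n => x (ns n)) _ (fun n => hbdd (ns n))
    have hlim0 : Tendsto (fun j => S (x (ns (ms j))) - x (ns (ms j))) atTop (𝓝 (0:H)) := by
      have h0 : Tendsto (fun n => S (x n) - x n) atTop (𝓝 (0:H)) :=
        tendsto_zero_iff_norm_tendsto_zero.2 hconv
      exact h0.comp (hns.comp hms.tendsto_atTop)
    have hfixq : S q = q := hSreg (fun j => x (ns (ms j))) q hq hlim0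
    exact ⟨q, hSsub hfixq, ms, hms, hq⟩
  obtain ⟨p, hpF, φ, hφ, hp⟩ := hclaim id tendsto_id
  refine ⟨p, hpF, fun y => ?_⟩
  refine tendsto_of_subseq_tendsto fun ns hns => ?_
  obtain ⟨q, hqF, ms, hms, hq⟩ := hclaim ns hns
  obtain ⟨t, ht⟩ := hinner p hpF q hqF
  have h1 : (⟪p, p - q⟫:ℝ) = t :=
    tendsto_nhds_unique (hp (p - q)) (ht.comp (tendsto_id.comp hφ.tendsto_atTop))
  have h2 : (⟪q, p - q⟫:ℝ) = t :=
    tendsto_nhds_unique (hq (p - q)) (ht.comp (hns.comp hms.tendsto_atTop))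
  have hpq : p = q := by
    have h0 : (⟪p - q, p - q⟫:ℝ) = 0 := by rw [inner_sub_left]; linarith
    have := inner_self_eq_zero.1 h0
    rwa [sub_eq_zero] at this
  exact ⟨ms, by rw [hpq]; exact hq y⟩
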